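/- arXiv:1208.3573 — 2 statements merged into one kernel-verified Lean document; each statement's English description precedes it below -/
import Mathlib

section
/- Suppose matrices W ∈ 𝒲 and V ∈ 𝒱 with ||V||_F = 1 minimize ||AW − V||_F over all W ∈ 𝒲, V ∈ 𝒱 with ||V||_F = 1, and V is invertible. Then the minimization can be performed columnwise: for each j, the pair (w_j, v_j) of j-th columns minimizes ||A w − v||_2 over admissible columns w and admissible columns v with ||v||_2 = ||v_j||_2 > 0. -/
open Matrix

/-- Viewing a plain complex vector as an element of Euclidean space. -/
def euc {n : ℕ} (x : Fin n → ℂ) : EuclideanSpace ℂ (Fin n) := WithLp.toLp 2 x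

/-- The Frobenius norm of a matrix. -/
noncomputable def frobNorm {m n : ℕ} (M : Matrix (Fin m) (Fin n) ℂ) : ℝ :=
  Real.sqrt (∑ i, ∑ j, ‖M i j‖ ^ 2)

/-- `v` is an admissible `j`-th column for the standard subspace with column patterns `P`. -/
def Supported {n : ℕ} (P : Fin n → Set (Fin n)) (j : Fin n) (v : Fin n → ℂ) : Prop :=
  ∀ i, i ∉ P j → v i = 0

/-- `M` lies in the standard matrix subspace with column patterns `P`. -/
def MatSupported {n : ℕ} (P : Fin n → Set (Fin n)) (M : Matrix (Fin n) (Fin n) ℂ) : Prop :=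
  ∀ j, Supported P j (fun i => M i j)

lemma euc_norm_sq {n : ℕ} (x : Fin n → ℂ) : ‖euc x‖ ^ 2 = ∑ i, ‖x i‖ ^ 2 := by
  rw [show ‖euc x‖ = Real.sqrt (∑ i, ‖x i‖ ^ 2) from EuclideanSpace.norm_eq (euc x),
    Real.sq_sqrt (by positivity)]

lemma frob_cols {n : ℕ} (M : Matrix (Fin n) (Fin n) ℂ) :
    frobNorm M = Real.sqrt (∑ k, ‖euc (fun i => M i k)‖ ^ 2) := by
  rw [frobNorm, Finset.sum_comm]
  congr 1
  exact Finset.sum_congr rfl fun k _ => (euc_norm_sq _).symm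

/-- If `W ∈ 𝒲`, `V ∈ 𝒱` with `‖V‖_F = 1` minimize `‖AW − V‖_F` over the
standard matrix subspaces `𝒲, 𝒱` subject to `‖V‖_F = 1`, and `V` is invertible, then for each
`j` the pair of `j`-th columns `(w_j, v_j)` minimizes `‖A w − v‖₂` over admissible columns `w`
and admissible columns `v` with `‖v‖₂ = ‖v_j‖₂ > 0`. -/
theorem stmt_2 {n : ℕ} (A : Matrix (Fin n) (Fin n) ℂ) (hA : IsUnit A.det)
    (Pw Pv : Fin n → Set (Fin n)) (W V : Matrix (Fin n) (Fin n) ℂ)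
    (hW : MatSupported Pw W) (hV : MatSupported Pv V) (hVnorm : frobNorm V = 1)
    (hmin : ∀ W' V' : Matrix (Fin n) (Fin n) ℂ, MatSupported Pw W' → MatSupported Pv V' →
      frobNorm V' = 1 → frobNorm (A * W - V) ≤ frobNorm (A * W' - V'))
    (hVinv : IsUnit V.det) :
    ∀ j : Fin n, 0 < ‖euc (fun i => V i j)‖ ∧
      ∀ w v : Fin n → ℂ, Supported Pw j w → Supported Pv j v →
        ‖euc v‖ = ‖euc (fun i => V i j)‖ →
        ‖euc (A.mulVec (fun i => W i j)) - euc (fun i => V i j)‖ ≤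
          ‖euc (A.mulVec w) - euc v‖ := by
  intro j
  constructor
  · rw [norm_pos_iff]
    intro h
    have hcol : ∀ i, V i j = 0 := fun i => by
      have := congrArg (fun x : EuclideanSpace ℂ (Fin n) => WithLp.ofLp x i) h
      simpa [euc] using this
    exact hVinv.ne_zero (Matrix.det_eq_zero_of_column_eq_zero j hcol)
  · intro w v hw hv hnorm
    set W' := W.updateCol j w with hW'def
    set V' := V.updateCol j v with hV'def
    have hW' : MatSupported Pw W' := by
      intro k i hi
      by_cases hk : k = j
      · rw [hk] at hi ⊢
        simp only [hW'def, Matrix.updateCol_apply, if_pos rfl]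
        exact hw i hi
      · simp only [hW'def, Matrix.updateCol_apply, if_neg hk]
        exact hW k i hi
    have hV' : MatSupported Pv V' := by
      intro k i hi
      by_cases hk : k = j
      · rw [hk] at hi ⊢
        simp only [hV'def, Matrix.updateCol_apply, if_pos rfl]
        exact hv i hi
      · simp only [hV'def, Matrix.updateCol_apply, if_neg hk]
        exact hV k i hi
    have hcolV' : ∀ k, ‖euc (fun i => V' i k)‖ ^ 2 = ‖euc (fun i => V i k)‖ ^ 2 := by
      intro k
      by_cases hk : k = j
      · rw [hk]
        have hvj : (fun i => V' i j) = v := by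
          funext i; simp [hV'def, Matrix.updateCol_apply]
        rw [hvj, hnorm]
      · have : (fun i => V' i k) = (fun i => V i k) := by
          funext i; simp [hV'def, Matrix.updateCol_apply, hk]
        rw [this]
    have hV'norm : frobNorm V' = 1 := by
      rw [frob_cols] at hVnorm ⊢
      rw [Finset.sum_congr rfl fun k _ => hcolV' k]
      exact hVnorm
    have hle := hmin W' V' hW' hV' hV'norm
    rw [frob_cols (A * W - V), frob_cols (A * W' - V')] at hle
    have h0 : (0:ℝ) ≤ ∑ k, ‖euc (fun i => (A * W' - V') i k)‖ ^ 2 :=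
      Finset.sum_nonneg fun k _ => sq_nonneg _
    have hS : (∑ k, ‖euc (fun i => (A * W - V) i k)‖ ^ 2) ≤
        ∑ k, ‖euc (fun i => (A * W' - V') i k)‖ ^ 2 :=
      (Real.sqrt_le_sqrt_iff h0).mp hle
    have hcolne : ∀ k ∈ Finset.univ.erase j,
        ‖euc (fun i => (A * W - V) i k)‖ ^ 2 = ‖euc (fun i => (A * W' - V') i k)‖ ^ 2 := by
      intro k hk
      have hkj : k ≠ j := Finset.ne_of_mem_erase hk
      have : (fun i => (A * W' - V') i k) = (fun i => (A * W - V) i k) := by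
        funext i
        simp [hW'def, hV'def, Matrix.sub_apply, Matrix.mul_apply,
          Matrix.updateCol_apply, hkj]
      rw [this]
    have hsplit1 := Finset.add_sum_erase Finset.univ
      (fun k => ‖euc (fun i => (A * W - V) i k)‖ ^ 2) (Finset.mem_univ j)
    have hsplit2 := Finset.add_sum_erase Finset.univ
      (fun k => ‖euc (fun i => (A * W' - V') i k)‖ ^ 2) (Finset.mem_univ j)
    have hrest : (∑ k ∈ Finset.univ.erase j, ‖euc (fun i => (A * W - V) i k)‖ ^ 2) =
        ∑ k ∈ Finset.univ.erase j, ‖euc (fun i => (A * W' - V') i k)‖ ^ 2 :=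
      Finset.sum_congr rfl hcolne
    have hj : ‖euc (fun i => (A * W - V) i j)‖ ^ 2 ≤
        ‖euc (fun i => (A * W' - V') i j)‖ ^ 2 := by
      rw [← hsplit1, ← hsplit2, hrest] at hS
      beta_reduce at hS
      linarith
    have hcj1 : (fun i => (A * W - V) i j) =
        (A.mulVec (fun i => W i j) - fun i => V i j) := by
      funext i
      simp [Matrix.sub_apply, Matrix.mul_apply, Matrix.mulVec, dotProduct]
    have hcj2 : (fun i => (A * W' - V') i j) = (A.mulVec w - v) := by
      funext i
      simp [hW'def, hV'def, Matrix.sub_apply, Matrix.mul_apply,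
        Matrix.updateCol_apply, Matrix.mulVec, dotProduct]
    rw [hcj1, hcj2] at hj
    have e1 : euc (A.mulVec (fun i => W i j)) - euc (fun i => V i j) =
        euc (A.mulVec (fun i => W i j) - fun i => V i j) := rfl
    have e2 : euc (A.mulVec w) - euc v = euc (A.mulVec w - v) := rfl
    rw [e1, e2]
    have := Real.sqrt_le_sqrt hj
    rwa [Real.sqrt_sq (norm_nonneg _), Real.sqrt_sq (norm_nonneg _)] at this
end

section
/- For every invertible diagonal matrix D and invertible V, (VD, WD) maps to the same product as (V, W) under the map (V, W) ↦ W V^{-1}; i.e., (WD)(VD)^{-1} = W V^{-1}. Consequently, the rank of the derivative of this map at any invertible pair (V, W) in 𝒱 × 𝒲 (for standard matrix subspaces closed under right multiplication by diagonal matrices) is at most dim 𝒱 + dim 𝒲 − n. -/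
open Matrix

set_option maxHeartbeats 1000000
set_option synthInstance.maxHeartbeats 400000

/-- A standard matrix subspace: one spanned by standard basis matrices. -/
def IsStandard {n : ℕ} (𝒱 : Submodule ℂ (Matrix (Fin n) (Fin n) ℂ)) : Prop :=
  ∃ P : Set (Fin n × Fin n),
    𝒱 = Submodule.span ℂ {M | ∃ p ∈ P, M = Matrix.single p.1 p.2 (1 : ℂ)}

lemma isStandard_mul_diagonal {n : ℕ} {𝒱 : Submodule ℂ (Matrix (Fin n) (Fin n) ℂ)}
    (hVs : IsStandard 𝒱) {A : Matrix (Fin n) (Fin n) ℂ} (hA : A ∈ 𝒱) (d : Fin n → ℂ) :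
    A * Matrix.diagonal d ∈ 𝒱 := by
  obtain ⟨P, rfl⟩ := hVs
  induction hA using Submodule.span_induction with
  | mem M hM =>
    obtain ⟨p, hp, rfl⟩ := hM
    have : Matrix.single p.1 p.2 (1 : ℂ) * Matrix.diagonal d
        = d p.2 • Matrix.single p.1 p.2 (1 : ℂ) := by
      ext i j
      simp [Matrix.mul_diagonal, Matrix.single, Matrix.smul_apply]
      aesop
    rw [this]
    exact Submodule.smul_mem _ _ (Submodule.subset_span ⟨p, hp, rfl⟩)
  | zero => simp
  | add x y _ _ hx hy => rw [add_mul]; exact Submodule.add_mem _ hx hy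
  | smul c x _ hx => rw [smul_mul_assoc]; exact Submodule.smul_mem _ _ hx

/-- For every invertible diagonal `D`, `(WD)(VD)⁻¹ = WV⁻¹`.  Consequently,
for standard matrix subspaces `𝒱, 𝒲` (closed under right multiplication by diagonal
matrices), the rank of the derivative of `(V, W) ↦ WV⁻¹` at any invertible pair
`(V, W) ∈ 𝒱 × 𝒲` is at most `dim 𝒱 + dim 𝒲 − n`. -/
theorem stmt_8 {n : ℕ} (𝒱 𝒲 : Submodule ℂ (Matrix (Fin n) (Fin n) ℂ))
    (hVs : IsStandard 𝒱) (hWs : IsStandard 𝒲)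
    (V W : Matrix (Fin n) (Fin n) ℂ) (hV : V ∈ 𝒱) (hW : W ∈ 𝒲)
    (hVinv : IsUnit V.det) (hWinv : IsUnit W.det) :
    (∀ d : Fin n → ℂ, (∀ i, d i ≠ 0) →
      (W * Matrix.diagonal d) * (V * Matrix.diagonal d)⁻¹ = W * V⁻¹) ∧
    Module.finrank ℂ
        (LinearMap.range
          (((LinearMap.mulRight ℂ V⁻¹).comp (𝒲.subtype.comp (LinearMap.snd ℂ 𝒱 𝒲))) -
           ((LinearMap.mulRight ℂ V⁻¹).comp ((LinearMap.mulLeft ℂ (W * V⁻¹)).comp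
              (𝒱.subtype.comp (LinearMap.fst ℂ 𝒱 𝒲)))))) ≤
      Module.finrank ℂ 𝒱 + Module.finrank ℂ 𝒲 - n := by
  constructor
  · intro d hd
    have hdet : IsUnit (Matrix.diagonal d).det := by
      rw [Matrix.det_diagonal]
      exact isUnit_iff_ne_zero.mpr (Finset.prod_ne_zero_iff.mpr fun i _ => hd i)
    rw [Matrix.mul_inv_rev, ← mul_assoc, mul_assoc W, Matrix.mul_nonsing_inv _ hdet,
      mul_one]
  · set L := (((LinearMap.mulRight ℂ V⁻¹).comp (𝒲.subtype.comp (LinearMap.snd ℂ 𝒱 𝒲))) -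
           ((LinearMap.mulRight ℂ V⁻¹).comp ((LinearMap.mulLeft ℂ (W * V⁻¹)).comp
              (𝒱.subtype.comp (LinearMap.fst ℂ 𝒱 𝒲))))) with hL
    have hinv : V⁻¹ * V = 1 := Matrix.nonsing_inv_mul _ hVinv
    -- the linear map d ↦ (V diag d, W diag d) lands in ker L
    let ψ : (Fin n → ℂ) →ₗ[ℂ] (𝒱 × 𝒲) :=
      { toFun := fun d => (⟨V * Matrix.diagonal d, isStandard_mul_diagonal hVs hV d⟩,
          ⟨W * Matrix.diagonal d, isStandard_mul_diagonal hWs hW d⟩)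
        map_add' := fun d e => by
          ext <;> simp [Matrix.diagonal_add, mul_add]
        map_smul' := fun c d => by
          ext <;> simp [Matrix.diagonal_smul, mul_smul_comm] }
    have hker : ∀ d, ψ d ∈ LinearMap.ker L := by
      intro d
      simp only [LinearMap.mem_ker, hL, LinearMap.sub_apply, LinearMap.comp_apply,
        LinearMap.mulRight_apply, LinearMap.mulLeft_apply, LinearMap.snd_apply,
        LinearMap.fst_apply, Submodule.coe_subtype, ψ, LinearMap.coe_mk, AddHom.coe_mk]
      rw [sub_eq_zero]
      simp only [Matrix.mul_assoc]
      rw [← Matrix.mul_assoc V⁻¹ V, hinv, Matrix.one_mul]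
    let ψ' : (Fin n → ℂ) →ₗ[ℂ] LinearMap.ker L := LinearMap.codRestrict _ ψ hker
    have hinj : Function.Injective ψ' := by
      intro d e h
      have hψ : ψ d = ψ e := Subtype.ext_iff.mp h
      have h1 : V * Matrix.diagonal d = V * Matrix.diagonal e :=
        congrArg (fun x => (x.1 : Matrix (Fin n) (Fin n) ℂ)) hψ
      have h2 : Matrix.diagonal d = Matrix.diagonal e := by
        have := congrArg (fun M => V⁻¹ * M) h1
        simpa [← mul_assoc, hinv] using this
      funext i
      have := congrFun (congrFun h2 i) i
      simpa using this
    have hn : n ≤ Module.finrank ℂ (LinearMap.ker L) := by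
      have := LinearMap.finrank_le_finrank_of_injective hinj
      simpa using this
    have hrn := LinearMap.finrank_range_add_finrank_ker L
    rw [Module.finrank_prod] at hrn
    omega
end
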